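/- arXiv:1312.2253 — 2 statements merged into one kernel-verified Lean document; each statement's English description precedes it below -/
import Mathlib

section
/- Let d ≥ 2 and let (U,V) be a pair of random vectors in ℝ^d with 𝔼U = 𝔼V = 0, 𝔼|U|² = 𝔼|V|² = 1, 𝔼|U|⁴ < ∞, 𝔼|V|⁴ < ∞, and suppose the isotropy condition 𝔼(U⊗U) = (1/d)·Id holds. Let (U_*,V_*) be an independent copy of (U,V). Then f(𝔼|U−V|²) ≤ (d/(d−1)) · 𝔼( |U−U_*|²|V−V_*|² − ((U−U_*)·(V−V_*))² ). -/
open MeasureTheory ProbabilityTheory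
open scoped RealInnerProductSpace

variable {d : ℕ}

lemma inner_eq (x y : EuclideanSpace ℝ (Fin d)) : ⟪x, y⟫ = ∑ i, x i * y i := by
  simp [PiLp.inner_apply, RCLike.inner_apply, conj_trivial]
  exact Finset.sum_congr rfl fun _ _ => mul_comm _ _

lemma norm_sq_eq (x : EuclideanSpace ℝ (Fin d)) : ‖x‖ ^ 2 = ∑ i, x i ^ 2 := by
  rw [← real_inner_self_eq_norm_sq, inner_eq]; simp [sq]

lemma coord_abs_le (x : EuclideanSpace ℝ (Fin d)) (i : Fin d) : |x i| ≤ ‖x‖ := by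
  have h1 : |x i| ^ 2 ≤ ‖x‖ ^ 2 := by
    rw [norm_sq_eq, sq_abs]
    exact Finset.single_le_sum (f := fun j => x j ^ 2) (fun j _ => sq_nonneg _) (Finset.mem_univ i)
  simpa using abs_le_of_sq_le_sq h1 (norm_nonneg x)

lemma habs1 (x : EuclideanSpace ℝ (Fin d)) (i : Fin d) : |x i| ≤ 1 + ‖x‖ ^ 2 := by
  nlinarith [coord_abs_le x i, norm_nonneg x, sq_nonneg (‖x‖ - 1), abs_nonneg (x i)]

lemma habs2 (x : EuclideanSpace ℝ (Fin d)) (i k : Fin d) : |x i * x k| ≤ 1 + ‖x‖ ^ 2 := by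
  rw [abs_mul]
  nlinarith [coord_abs_le x i, coord_abs_le x k, norm_nonneg x, abs_nonneg (x i), abs_nonneg (x k)]

lemma habs0 (x : EuclideanSpace ℝ (Fin d)) : |(1:ℝ)| ≤ 1 + ‖x‖ ^ 2 := by
  rw [abs_one]; nlinarith [sq_nonneg ‖x‖]

lemma bnd_mul {x y : EuclideanSpace ℝ (Fin d)} {p q : ℝ}
    (hp : |p| ≤ 1 + ‖x‖ ^ 2) (hq : |q| ≤ 1 + ‖y‖ ^ 2) :
    |p * q| ≤ (1 + ‖x‖ ^ 2 + ‖y‖ ^ 2) ^ 2 := by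
  rw [abs_mul]
  nlinarith [abs_nonneg p, abs_nonneg q, sq_nonneg ‖x‖, sq_nonneg ‖y‖,
    mul_nonneg (sq_nonneg ‖x‖) (sq_nonneg ‖y‖)]

lemma bnd_liftx {x y : EuclideanSpace ℝ (Fin d)} {p : ℝ} (hp : |p| ≤ 1 + ‖x‖ ^ 2) :
    |p| ≤ (1 + ‖x‖ ^ 2 + ‖y‖ ^ 2) ^ 2 := by
  nlinarith [sq_nonneg ‖x‖, sq_nonneg ‖y‖, abs_nonneg p, sq_nonneg (‖x‖^2 + ‖y‖^2),
    mul_nonneg (sq_nonneg ‖x‖) (sq_nonneg ‖y‖)]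

lemma bnd_lifty {x y : EuclideanSpace ℝ (Fin d)} {p : ℝ} (hp : |p| ≤ 1 + ‖y‖ ^ 2) :
    |p| ≤ (1 + ‖x‖ ^ 2 + ‖y‖ ^ 2) ^ 2 := by
  nlinarith [sq_nonneg ‖x‖, sq_nonneg ‖y‖, abs_nonneg p, sq_nonneg (‖x‖^2 + ‖y‖^2),
    mul_nonneg (sq_nonneg ‖x‖) (sq_nonneg ‖y‖)]

section helpers
variable {Ω : Type*} [MeasurableSpace Ω] {μ : Measure Ω} [IsProbabilityMeasure μ]
  {U V Us Vs : Ω → EuclideanSpace ℝ (Fin d)}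

lemma master_int (hUm : Measurable U) (hVm : Measurable V)
    (hU4 : Integrable (fun ω => ‖U ω‖ ^ 4) μ) (hV4 : Integrable (fun ω => ‖V ω‖ ^ 4) μ)
    (f : EuclideanSpace ℝ (Fin d) × EuclideanSpace ℝ (Fin d) → ℝ) (hf : Measurable f)
    (hb : ∀ z, |f z| ≤ (1 + ‖z.1‖ ^ 2 + ‖z.2‖ ^ 2) ^ 2) :
    Integrable (fun ω => f (U ω, V ω)) μ := by
  have hdom : Integrable (fun ω => 3 * (1 + ‖U ω‖ ^ 4 + ‖V ω‖ ^ 4)) μ :=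
    (((integrable_const 1).add hU4).add hV4).const_mul 3
  refine hdom.mono' ((hf.comp (hUm.prodMk hVm)).aestronglyMeasurable) (ae_of_all _ fun ω => ?_)
  have h := hb (U ω, V ω)
  simp only [Real.norm_eq_abs] at *
  nlinarith [norm_nonneg (U ω), norm_nonneg (V ω), sq_nonneg (‖U ω‖ ^ 2 - 1),
    sq_nonneg (‖V ω‖ ^ 2 - 1), sq_nonneg (‖U ω‖ ^ 2 - ‖V ω‖ ^ 2), abs_nonneg (f (U ω, V ω))]

lemma copy_integral
    (hcopy : Measure.map (fun ω => (U ω, V ω)) μ = Measure.map (fun ω => (Us ω, Vs ω)) μ)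
    (hUm : Measurable U) (hVm : Measurable V) (hUsm : Measurable Us) (hVsm : Measurable Vs)
    (g : EuclideanSpace ℝ (Fin d) × EuclideanSpace ℝ (Fin d) → ℝ) (hg : Measurable g) :
    ∫ ω, g (Us ω, Vs ω) ∂μ = ∫ ω, g (U ω, V ω) ∂μ := by
  rw [← integral_map ((hUsm.prodMk hVsm)).aemeasurable hg.aestronglyMeasurable, ← hcopy,
    integral_map ((hUm.prodMk hVm)).aemeasurable hg.aestronglyMeasurable]

lemma copy_integrable
    (hcopy : Measure.map (fun ω => (U ω, V ω)) μ = Measure.map (fun ω => (Us ω, Vs ω)) μ)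
    (hUm : Measurable U) (hVm : Measurable V) (hUsm : Measurable Us) (hVsm : Measurable Vs)
    (g : EuclideanSpace ℝ (Fin d) × EuclideanSpace ℝ (Fin d) → ℝ) (hg : Measurable g)
    (hint : Integrable (fun ω => g (U ω, V ω)) μ) :
    Integrable (fun ω => g (Us ω, Vs ω)) μ := by
  have h1 : Integrable g (Measure.map (fun ω => (U ω, V ω)) μ) := by
    rwa [integrable_map_measure hg.aestronglyMeasurable ((hUm.prodMk hVm)).aemeasurable]
  rw [hcopy] at h1
  rwa [integrable_map_measure hg.aestronglyMeasurable ((hUsm.prodMk hVsm)).aemeasurable] at h1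

lemma key_lemma (hUm : Measurable U) (hVm : Measurable V) (hUsm : Measurable Us) (hVsm : Measurable Vs)
    (hU4 : Integrable (fun ω => ‖U ω‖ ^ 4) μ) (hV4 : Integrable (fun ω => ‖V ω‖ ^ 4) μ)
    (hindep : IndepFun (fun ω => (U ω, V ω)) (fun ω => (Us ω, Vs ω)) μ)
    (hcopy : Measure.map (fun ω => (U ω, V ω)) μ = Measure.map (fun ω => (Us ω, Vs ω)) μ)
    (f g : EuclideanSpace ℝ (Fin d) × EuclideanSpace ℝ (Fin d) → ℝ)
    (hf : Measurable f) (hg : Measurable g)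
    (hbf : ∀ z, |f z| ≤ (1 + ‖z.1‖ ^ 2 + ‖z.2‖ ^ 2) ^ 2)
    (hbg : ∀ z, |g z| ≤ (1 + ‖z.1‖ ^ 2 + ‖z.2‖ ^ 2) ^ 2) :
    Integrable (fun ω => f (U ω, V ω) * g (Us ω, Vs ω)) μ ∧
      ∫ ω, f (U ω, V ω) * g (Us ω, Vs ω) ∂μ =
        (∫ ω, f (U ω, V ω) ∂μ) * ∫ ω, g (U ω, V ω) ∂μ := by
  have hfX : Integrable (fun ω => f (U ω, V ω)) μ := master_int hUm hVm hU4 hV4 f hf hbf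
  have hgX : Integrable (fun ω => g (U ω, V ω)) μ := master_int hUm hVm hU4 hV4 g hg hbg
  have hgY : Integrable (fun ω => g (Us ω, Vs ω)) μ :=
    copy_integrable hcopy hUm hVm hUsm hVsm g hg hgX
  have hi : IndepFun (fun ω => f (U ω, V ω)) (fun ω => g (Us ω, Vs ω)) μ :=
    hindep.comp hf hg
  refine ⟨hi.integrable_mul hfX hgY, ?_⟩
  have heq := hi.integral_mul_eq_mul_integral hfX.aestronglyMeasurable hgY.aestronglyMeasurable
  rw [show ((fun ω => f (U ω, V ω)) * fun ω => g (Us ω, Vs ω)) =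
      fun ω => f (U ω, V ω) * g (Us ω, Vs ω) from rfl] at heq
  rw [heq, copy_integral hcopy hUm hVm hUsm hVsm g hg]

end helpers

section quadsec
variable {Ω : Type*} [MeasurableSpace Ω] {μ : Measure Ω} [IsProbabilityMeasure μ]
  {U V Us Vs : Ω → EuclideanSpace ℝ (Fin d)}

lemma quad_lemma (hUm : Measurable U) (hVm : Measurable V) (hUsm : Measurable Us) (hVsm : Measurable Vs)
    (hU4 : Integrable (fun ω => ‖U ω‖ ^ 4) μ) (hV4 : Integrable (fun ω => ‖V ω‖ ^ 4) μ)
    (hindep : IndepFun (fun ω => (U ω, V ω)) (fun ω => (Us ω, Vs ω)) μ)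
    (hcopy : Measure.map (fun ω => (U ω, V ω)) μ = Measure.map (fun ω => (Us ω, Vs ω)) μ)
    (hU1 : ∀ a, ∫ ω, U ω a ∂μ = 0) (hV1 : ∀ a, ∫ ω, V ω a ∂μ = 0)
    (i k j l : Fin d) :
    Integrable (fun ω => ((U ω i - Us ω i) * (U ω k - Us ω k)) *
        ((V ω j - Vs ω j) * (V ω l - Vs ω l))) μ ∧
    ∫ ω, ((U ω i - Us ω i) * (U ω k - Us ω k)) * ((V ω j - Vs ω j) * (V ω l - Vs ω l)) ∂μ
      = 2 * (∫ ω, (U ω i * U ω k) * (V ω j * V ω l) ∂μ)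
        + 2 * (∫ ω, U ω i * U ω k ∂μ) * (∫ ω, V ω j * V ω l ∂μ)
        + 2 * (∫ ω, U ω i * V ω j ∂μ) * (∫ ω, U ω k * V ω l ∂μ)
        + 2 * (∫ ω, U ω i * V ω l ∂μ) * (∫ ω, U ω k * V ω j ∂μ) := by
  have hev : ∀ a : Fin d, Measurable fun x : EuclideanSpace ℝ (Fin d) => x a :=
    fun a => (EuclideanSpace.proj (𝕜 := ℝ) a).continuous.measurable
  have mx : ∀ a : Fin d, Measurable fun z : EuclideanSpace ℝ (Fin d) × EuclideanSpace ℝ (Fin d) => z.1 a :=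
    fun a => (hev a).comp measurable_fst
  have my : ∀ a : Fin d, Measurable fun z : EuclideanSpace ℝ (Fin d) × EuclideanSpace ℝ (Fin d) => z.2 a :=
    fun a => (hev a).comp measurable_snd
  have key := key_lemma (μ := μ) (U := U) (V := V) (Us := Us) (Vs := Vs)
    hUm hVm hUsm hVsm hU4 hV4 hindep hcopy
  -- the 16 pieces
  have P0 : Integrable (fun ω => (U ω i * U ω k) * (V ω j * V ω l)) μ :=
    master_int hUm hVm hU4 hV4 (fun z => (z.1 i * z.1 k) * (z.2 j * z.2 l))
      (((mx i).mul (mx k)).mul ((my j).mul (my l)))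
      (fun z => bnd_mul (habs2 z.1 i k) (habs2 z.2 j l))
  have P1 := key (fun z => z.1 k * (z.2 j * z.2 l)) (fun z => z.1 i)
      ((mx k).mul ((my j).mul (my l))) (mx i)
      (fun z => bnd_mul (habs1 z.1 k) (habs2 z.2 j l)) (fun z => bnd_liftx (habs1 z.1 i))
  have P2 := key (fun z => z.1 i * (z.2 j * z.2 l)) (fun z => z.1 k)
      ((mx i).mul ((my j).mul (my l))) (mx k)
      (fun z => bnd_mul (habs1 z.1 i) (habs2 z.2 j l)) (fun z => bnd_liftx (habs1 z.1 k))
  have P3 := key (fun z => (z.1 i * z.1 k) * z.2 l) (fun z => z.2 j)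
      (((mx i).mul (mx k)).mul (my l)) (my j)
      (fun z => bnd_mul (habs2 z.1 i k) (habs1 z.2 l)) (fun z => bnd_lifty (habs1 z.2 j))
  have P4 := key (fun z => (z.1 i * z.1 k) * z.2 j) (fun z => z.2 l)
      (((mx i).mul (mx k)).mul (my j)) (my l)
      (fun z => bnd_mul (habs2 z.1 i k) (habs1 z.2 j)) (fun z => bnd_lifty (habs1 z.2 l))
  have P5 := key (fun z => z.2 j * z.2 l) (fun z => z.1 i * z.1 k)
      ((my j).mul (my l)) ((mx i).mul (mx k))
      (fun z => bnd_lifty (habs2 z.2 j l)) (fun z => bnd_liftx (habs2 z.1 i k))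
  have P6 := key (fun z => z.1 i * z.1 k) (fun z => z.2 j * z.2 l)
      ((mx i).mul (mx k)) ((my j).mul (my l))
      (fun z => bnd_liftx (habs2 z.1 i k)) (fun z => bnd_lifty (habs2 z.2 j l))
  have P7 := key (fun z => z.1 k * z.2 l) (fun z => z.1 i * z.2 j)
      ((mx k).mul (my l)) ((mx i).mul (my j))
      (fun z => bnd_mul (habs1 z.1 k) (habs1 z.2 l)) (fun z => bnd_mul (habs1 z.1 i) (habs1 z.2 j))
  have P8 := key (fun z => z.1 k * z.2 j) (fun z => z.1 i * z.2 l)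
      ((mx k).mul (my j)) ((mx i).mul (my l))
      (fun z => bnd_mul (habs1 z.1 k) (habs1 z.2 j)) (fun z => bnd_mul (habs1 z.1 i) (habs1 z.2 l))
  have P9 := key (fun z => z.1 i * z.2 l) (fun z => z.1 k * z.2 j)
      ((mx i).mul (my l)) ((mx k).mul (my j))
      (fun z => bnd_mul (habs1 z.1 i) (habs1 z.2 l)) (fun z => bnd_mul (habs1 z.1 k) (habs1 z.2 j))
  have P10 := key (fun z => z.1 i * z.2 j) (fun z => z.1 k * z.2 l)
      ((mx i).mul (my j)) ((mx k).mul (my l))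
      (fun z => bnd_mul (habs1 z.1 i) (habs1 z.2 j)) (fun z => bnd_mul (habs1 z.1 k) (habs1 z.2 l))
  have P11 := key (fun z => z.2 l) (fun z => (z.1 i * z.1 k) * z.2 j)
      (my l) (((mx i).mul (mx k)).mul (my j))
      (fun z => bnd_lifty (habs1 z.2 l)) (fun z => bnd_mul (habs2 z.1 i k) (habs1 z.2 j))
  have P12 := key (fun z => z.2 j) (fun z => (z.1 i * z.1 k) * z.2 l)
      (my j) (((mx i).mul (mx k)).mul (my l))
      (fun z => bnd_lifty (habs1 z.2 j)) (fun z => bnd_mul (habs2 z.1 i k) (habs1 z.2 l))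
  have P13 := key (fun z => z.1 k) (fun z => z.1 i * (z.2 j * z.2 l))
      (mx k) ((mx i).mul ((my j).mul (my l)))
      (fun z => bnd_liftx (habs1 z.1 k)) (fun z => bnd_mul (habs1 z.1 i) (habs2 z.2 j l))
  have P14 := key (fun z => z.1 i) (fun z => z.1 k * (z.2 j * z.2 l))
      (mx i) ((mx k).mul ((my j).mul (my l)))
      (fun z => bnd_liftx (habs1 z.1 i)) (fun z => bnd_mul (habs1 z.1 k) (habs2 z.2 j l))
  have P15 := key (fun _ => (1:ℝ)) (fun z => (z.1 i * z.1 k) * (z.2 j * z.2 l))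
      measurable_const (((mx i).mul (mx k)).mul ((my j).mul (my l)))
      (fun z => bnd_liftx (habs0 z.1)) (fun z => bnd_mul (habs2 z.1 i k) (habs2 z.2 j l))
  -- decompose into 16 pieces
  set G : Fin 16 → Ω → ℝ := ![
    fun ω => (U ω i * U ω k) * (V ω j * V ω l),
    fun ω => -((U ω k * (V ω j * V ω l)) * Us ω i),
    fun ω => -((U ω i * (V ω j * V ω l)) * Us ω k),
    fun ω => -(((U ω i * U ω k) * V ω l) * Vs ω j),
    fun ω => -(((U ω i * U ω k) * V ω j) * Vs ω l),
    fun ω => (V ω j * V ω l) * (Us ω i * Us ω k),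
    fun ω => (U ω i * U ω k) * (Vs ω j * Vs ω l),
    fun ω => (U ω k * V ω l) * (Us ω i * Vs ω j),
    fun ω => (U ω k * V ω j) * (Us ω i * Vs ω l),
    fun ω => (U ω i * V ω l) * (Us ω k * Vs ω j),
    fun ω => (U ω i * V ω j) * (Us ω k * Vs ω l),
    fun ω => -(V ω l * ((Us ω i * Us ω k) * Vs ω j)),
    fun ω => -(V ω j * ((Us ω i * Us ω k) * Vs ω l)),
    fun ω => -(U ω k * (Us ω i * (Vs ω j * Vs ω l))),
    fun ω => -(U ω i * (Us ω k * (Vs ω j * Vs ω l))),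
    fun ω => (1:ℝ) * ((Us ω i * Us ω k) * (Vs ω j * Vs ω l))] with hG
  have hfun : (fun ω => ((U ω i - Us ω i) * (U ω k - Us ω k)) *
      ((V ω j - Vs ω j) * (V ω l - Vs ω l))) = fun ω => ∑ n : Fin 16, G n ω := by
    funext ω
    simp only [hG, Fin.sum_univ_succ, Fin.sum_univ_zero, Matrix.cons_val_zero,
      Matrix.cons_val_succ]
    ring
  have hint : ∀ n : Fin 16, Integrable (G n) μ := by
    intro n
    fin_cases n <;>
      simp only [hG, Matrix.cons_val_zero, Matrix.cons_val_succ] <;>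
      first
        | exact P0
        | exact P1.1.neg | exact P2.1.neg | exact P3.1.neg | exact P4.1.neg
        | exact P5.1 | exact P6.1 | exact P7.1 | exact P8.1 | exact P9.1 | exact P10.1
        | exact P11.1.neg | exact P12.1.neg | exact P13.1.neg | exact P14.1.neg
        | exact P15.1
  have hint2 : Integrable (fun ω => ((U ω i - Us ω i) * (U ω k - Us ω k)) *
      ((V ω j - Vs ω j) * (V ω l - Vs ω l))) μ := by
    rw [hfun]
    exact integrable_finset_sum Finset.univ (fun n _ => hint n)
  refine ⟨hint2, ?_⟩
  rw [hfun, integral_finset_sum Finset.univ (fun n _ => hint n)]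
  have e1 : ∫ ω, (1:ℝ) ∂μ = 1 := by simp
  simp only [hG, Fin.sum_univ_succ, Fin.sum_univ_zero, Matrix.cons_val_zero,
    Matrix.cons_val_succ, integral_neg]
  rw [P1.2, P2.2, P3.2, P4.2, P5.2, P6.2, P7.2, P8.2, P9.2, P10.2, P11.2, P12.2,
    P13.2, P14.2, P15.2, e1, hU1 i, hU1 k, hV1 j, hV1 l]
  ring

end quadsec

/-- The matrix `𝔼(X ⊗ Y)` with entries `𝔼(X_i Y_j)`. -/
noncomputable def covMatrix {Ω : Type*} [MeasurableSpace Ω] (μ : Measure Ω) {d : ℕ}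
    (X Y : Ω → EuclideanSpace ℝ (Fin d)) : Matrix (Fin d) (Fin d) ℝ :=
  Matrix.of fun i j => ∫ ω, X ω i * Y ω j ∂μ

set_option maxHeartbeats 1600000 in
/-- For `d ≥ 2` and a centered, normalized pair `(U,V)` of random vectors
in `ℝ^d` with finite fourth moments, satisfying the isotropy condition `𝔼(U⊗U) = (1/d)·Id`,
and `(U_*,V_*)` an independent copy of `(U,V)`:
`f(𝔼|U−V|²) ≤ (d/(d−1)) · 𝔼(|U−U_*|²|V−V_*|² − ((U−U_*)·(V−V_*))²)`, `f x = x - x²/4`. -/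
theorem stmt5 {d : ℕ} (hd : 2 ≤ d) {Ω : Type*} [MeasurableSpace Ω] (μ : Measure Ω)
    [IsProbabilityMeasure μ]
    (U V Us Vs : Ω → EuclideanSpace ℝ (Fin d))
    (hUm : Measurable U) (hVm : Measurable V) (hUsm : Measurable Us) (hVsm : Measurable Vs)
    (hUcen : ∫ ω, U ω ∂μ = 0) (hVcen : ∫ ω, V ω ∂μ = 0)
    (hUnorm : ∫ ω, ‖U ω‖ ^ 2 ∂μ = 1) (hVnorm : ∫ ω, ‖V ω‖ ^ 2 ∂μ = 1)
    (hU4 : Integrable (fun ω => ‖U ω‖ ^ 4) μ) (hV4 : Integrable (fun ω => ‖V ω‖ ^ 4) μ)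
    (hiso : covMatrix μ U U = ((d : ℝ)⁻¹) • (1 : Matrix (Fin d) (Fin d) ℝ))
    (hindep : IndepFun (fun ω => (U ω, V ω)) (fun ω => (Us ω, Vs ω)) μ)
    (hcopy : Measure.map (fun ω => (U ω, V ω)) μ = Measure.map (fun ω => (Us ω, Vs ω)) μ) :
    (∫ ω, ‖U ω - V ω‖ ^ 2 ∂μ) - (∫ ω, ‖U ω - V ω‖ ^ 2 ∂μ) ^ 2 / 4 ≤
      ((d : ℝ) / ((d : ℝ) - 1)) *
        ∫ ω, (‖U ω - Us ω‖ ^ 2 * ‖V ω - Vs ω‖ ^ 2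
          - ⟪U ω - Us ω, V ω - Vs ω⟫ ^ 2) ∂μ := by
  classical
  have hdpos : (0:ℝ) < (d:ℝ) := by
    have : (0:ℕ) < d := lt_of_lt_of_le (by norm_num) hd
    exact_mod_cast this
  have hd0 : (d:ℝ) ≠ 0 := ne_of_gt hdpos
  have hev : ∀ a : Fin d, Measurable fun x : EuclideanSpace ℝ (Fin d) => x a :=
    fun a => (EuclideanSpace.proj (𝕜 := ℝ) a).continuous.measurable
  have mx : ∀ a : Fin d, Measurable fun z : EuclideanSpace ℝ (Fin d) × EuclideanSpace ℝ (Fin d) => z.1 a :=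
    fun a => (hev a).comp measurable_fst
  have my : ∀ a : Fin d, Measurable fun z : EuclideanSpace ℝ (Fin d) × EuclideanSpace ℝ (Fin d) => z.2 a :=
    fun a => (hev a).comp measurable_snd
  have master := master_int (μ := μ) (U := U) (V := V) hUm hVm hU4 hV4
  -- basic integrabilities
  have hU2 : Integrable (fun ω => ‖U ω‖ ^ 2) μ := by
    refine master (fun z => ‖z.1‖ ^ 2) (measurable_fst.norm.pow_const 2) (fun z => ?_)
    show |‖z.1‖ ^ 2| ≤ (1 + ‖z.1‖ ^ 2 + ‖z.2‖ ^ 2) ^ 2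
    rw [abs_of_nonneg (sq_nonneg _)]
    nlinarith [sq_nonneg ‖z.1‖, sq_nonneg ‖z.2‖, sq_nonneg (‖z.1‖^2 + ‖z.2‖^2)]
  have hV2 : Integrable (fun ω => ‖V ω‖ ^ 2) μ := by
    refine master (fun z => ‖z.2‖ ^ 2) (measurable_snd.norm.pow_const 2) (fun z => ?_)
    show |‖z.2‖ ^ 2| ≤ (1 + ‖z.1‖ ^ 2 + ‖z.2‖ ^ 2) ^ 2
    rw [abs_of_nonneg (sq_nonneg _)]
    nlinarith [sq_nonneg ‖z.1‖, sq_nonneg ‖z.2‖, sq_nonneg (‖z.1‖^2 + ‖z.2‖^2)]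
  have hIinner : Integrable (fun ω => ⟪U ω, V ω⟫) μ := by
    refine master (fun z => ⟪z.1, z.2⟫) ((continuous_fst.inner continuous_snd).measurable)
      (fun z => ?_)
    show |⟪z.1, z.2⟫| ≤ (1 + ‖z.1‖ ^ 2 + ‖z.2‖ ^ 2) ^ 2
    have h1 := abs_real_inner_le_norm z.1 z.2
    nlinarith [norm_nonneg z.1, norm_nonneg z.2, sq_nonneg (‖z.1‖ - ‖z.2‖),
      sq_nonneg (‖z.1‖ + ‖z.2‖), sq_nonneg (‖z.1‖^2 + ‖z.2‖^2), abs_nonneg (⟪z.1, z.2⟫)]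
  have hIc : ∀ i j, Integrable (fun ω => U ω i * V ω j) μ := fun i j =>
    master (fun z => z.1 i * z.2 j) ((mx i).mul (my j))
      (fun z => bnd_mul (habs1 z.1 i) (habs1 z.2 j))
  have hIsV : ∀ i j, Integrable (fun ω => V ω i * V ω j) μ := fun i j =>
    master (fun z => z.2 i * z.2 j) ((my i).mul (my j))
      (fun z => bnd_lifty (habs2 z.2 i j))
  have hIm : ∀ i k j l, Integrable (fun ω => (U ω i * U ω k) * (V ω j * V ω l)) μ :=
    fun i k j l => master (fun z => (z.1 i * z.1 k) * (z.2 j * z.2 l))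
      (((mx i).mul (mx k)).mul ((my j).mul (my l)))
      (fun z => bnd_mul (habs2 z.1 i k) (habs2 z.2 j l))
  -- first moments vanish
  have hUint : Integrable U μ := by
    refine ((integrable_const (1:ℝ)).add hU2).mono' hUm.aestronglyMeasurable
      (ae_of_all _ fun ω => ?_)
    show ‖U ω‖ ≤ 1 + ‖U ω‖ ^ 2
    nlinarith [norm_nonneg (U ω), sq_nonneg (‖U ω‖ - 1)]
  have hVint : Integrable V μ := by
    refine ((integrable_const (1:ℝ)).add hV2).mono' hVm.aestronglyMeasurable
      (ae_of_all _ fun ω => ?_)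
    show ‖V ω‖ ≤ 1 + ‖V ω‖ ^ 2
    nlinarith [norm_nonneg (V ω), sq_nonneg (‖V ω‖ - 1)]
  have hU1 : ∀ a, ∫ ω, U ω a ∂μ = 0 := by
    intro a
    have h := (EuclideanSpace.proj (𝕜 := ℝ) a).integral_comp_comm hUint
    rw [hUcen] at h
    simpa using h
  have hV1 : ∀ a, ∫ ω, V ω a ∂μ = 0 := by
    intro a
    have h := (EuclideanSpace.proj (𝕜 := ℝ) a).integral_comp_comm hVint
    rw [hVcen] at h
    simpa using h
  -- isotropy in coordinates
  have hsU : ∀ a b, ∫ ω, U ω a * U ω b ∂μ = if a = b then (d:ℝ)⁻¹ else 0 := by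
    intro a b
    have h := congrFun (congrFun hiso a) b
    simpa [covMatrix, Matrix.one_apply] using h
  -- trace facts
  have htrV : ∑ j, ∫ ω, V ω j * V ω j ∂μ = 1 := by
    rw [← integral_finset_sum _ (fun j _ => hIsV j j), ← hVnorm]
    refine integral_congr_ae (ae_of_all _ fun ω => ?_)
    show ∑ j, V ω j * V ω j = ‖V ω‖ ^ 2
    rw [norm_sq_eq]
    exact Finset.sum_congr rfl fun j _ => by ring
  set t := ∫ ω, ⟪U ω, V ω⟫ ∂μ with hts
  have htc : t = ∑ i, ∫ ω, U ω i * V ω i ∂μ := by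
    rw [hts, ← integral_finset_sum _ (fun i _ => hIc i i)]
    refine integral_congr_ae (ae_of_all _ fun ω => ?_)
    show ⟪U ω, V ω⟫ = ∑ i, U ω i * V ω i
    exact inner_eq (U ω) (V ω)
  -- LHS
  have hL : ∫ ω, ‖U ω - V ω‖ ^ 2 ∂μ = 2 - 2 * t := by
    have h1 : ∫ ω, ‖U ω - V ω‖ ^ 2 ∂μ
        = ∫ ω, (‖U ω‖ ^ 2 - 2 * ⟪U ω, V ω⟫ + ‖V ω‖ ^ 2) ∂μ := by
      refine integral_congr_ae (ae_of_all _ fun ω => ?_)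
      show ‖U ω - V ω‖ ^ 2 = ‖U ω‖ ^ 2 - 2 * ⟪U ω, V ω⟫ + ‖V ω‖ ^ 2
      exact norm_sub_sq_real (U ω) (V ω)
    have hi2 : Integrable (fun ω => 2 * ⟪U ω, V ω⟫) μ := hIinner.const_mul 2
    have hi1 : Integrable (fun ω => ‖U ω‖ ^ 2 - 2 * ⟪U ω, V ω⟫) μ := hU2.sub hi2
    rw [h1, integral_add hi1 hV2, integral_sub hU2 hi2, integral_const_mul, hUnorm, hVnorm,
      ← hts]
    ring
  -- quad expansions
  have quad := quad_lemma (μ := μ) hUm hVm hUsm hVsm hU4 hV4 hindep hcopy hU1 hV1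
  -- pointwise double-sum expansion of the RHS integrand
  have hpt : ∀ ω, ‖U ω - Us ω‖ ^ 2 * ‖V ω - Vs ω‖ ^ 2 - ⟪U ω - Us ω, V ω - Vs ω⟫ ^ 2
      = ∑ i, ∑ j,
        (((U ω i - Us ω i) * (U ω i - Us ω i)) * ((V ω j - Vs ω j) * (V ω j - Vs ω j))
          - ((U ω i - Us ω i) * (U ω j - Us ω j)) * ((V ω i - Vs ω i) * (V ω j - Vs ω j))) := by
    intro ω
    rw [norm_sq_eq, norm_sq_eq, inner_eq, pow_two, Finset.sum_mul_sum, Finset.sum_mul_sum,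
      ← Finset.sum_sub_distrib]
    refine Finset.sum_congr rfl fun i _ => ?_
    rw [← Finset.sum_sub_distrib]
    refine Finset.sum_congr rfl fun j _ => ?_
    simp only [PiLp.sub_apply]
    ring
  have hquadint : ∀ i j : Fin d, Integrable (fun ω =>
      ((U ω i - Us ω i) * (U ω i - Us ω i)) * ((V ω j - Vs ω j) * (V ω j - Vs ω j))
        - ((U ω i - Us ω i) * (U ω j - Us ω j)) * ((V ω i - Vs ω i) * (V ω j - Vs ω j))) μ :=
    fun i j => (quad i i j j).1.sub (quad i j i j).1
  have hR1 : ∫ ω, (‖U ω - Us ω‖ ^ 2 * ‖V ω - Vs ω‖ ^ 2 - ⟪U ω - Us ω, V ω - Vs ω⟫ ^ 2) ∂μ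
      = ∑ i, ∑ j,
        ((∫ ω, ((U ω i - Us ω i) * (U ω i - Us ω i)) * ((V ω j - Vs ω j) * (V ω j - Vs ω j)) ∂μ)
          - ∫ ω, ((U ω i - Us ω i) * (U ω j - Us ω j)) * ((V ω i - Vs ω i) * (V ω j - Vs ω j)) ∂μ) := by
    rw [integral_congr_ae (ae_of_all _ hpt),
      integral_finset_sum _ (fun i _ => integrable_finset_sum _
        (fun j _ => hquadint i j))]
    refine Finset.sum_congr rfl fun i _ => ?_
    rw [integral_finset_sum _ (fun j _ => hquadint i j)]
    exact Finset.sum_congr rfl fun j _ => integral_sub (quad i i j j).1 (quad i j i j).1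
  -- named quantities
  set F2 := ∑ i, ∑ j, (∫ ω, U ω i * V ω j ∂μ) * (∫ ω, U ω i * V ω j ∂μ) with hF2
  set G2 := ∑ i, ∑ j, (∫ ω, U ω i * V ω j ∂μ) * (∫ ω, U ω j * V ω i ∂μ) with hG2
  set QQ := ∑ i, ∑ j, ((∫ ω, (U ω i * U ω i) * (V ω j * V ω j) ∂μ)
      - (∫ ω, (U ω i * U ω j) * (V ω i * V ω j) ∂μ)) with hQQdef
  -- evaluate the component sums
  have hSA : ∑ i, ∑ j, (∫ ω, U ω i * U ω i ∂μ) * (∫ ω, V ω j * V ω j ∂μ) = 1 := by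
    rw [← Finset.sum_mul_sum, htrV]
    have : ∀ i : Fin d, (∫ ω, U ω i * U ω i ∂μ) = (d:ℝ)⁻¹ := fun i => by
      rw [hsU i i, if_pos rfl]
    rw [Finset.sum_congr rfl fun i _ => this i]
    simp [Finset.sum_const, mul_inv_cancel₀ hd0]
  have hSB : ∑ i, ∑ j, (∫ ω, U ω i * U ω j ∂μ) * (∫ ω, V ω i * V ω j ∂μ) = (d:ℝ)⁻¹ := by
    have h1 : ∀ i : Fin d, ∑ j, (∫ ω, U ω i * U ω j ∂μ) * (∫ ω, V ω i * V ω j ∂μ)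
        = (d:ℝ)⁻¹ * ∫ ω, V ω i * V ω i ∂μ := by
      intro i
      rw [Finset.sum_congr rfl fun j _ => by rw [hsU i j]]
      simp [ite_mul]
    rw [Finset.sum_congr rfl fun i _ => h1 i, ← Finset.mul_sum, htrV, mul_one]
  have hSc : ∑ i, ∑ j, (∫ ω, U ω i * V ω i ∂μ) * (∫ ω, U ω j * V ω j ∂μ) = t ^ 2 := by
    rw [← Finset.sum_mul_sum, ← htc, sq]
  -- the full RHS evaluation
  have hRfinal : ∫ ω, (‖U ω - Us ω‖ ^ 2 * ‖V ω - Vs ω‖ ^ 2 - ⟪U ω - Us ω, V ω - Vs ω⟫ ^ 2) ∂μ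
      = 2 * QQ + 2 - 2 * (d:ℝ)⁻¹ + 4 * F2 - 2 * t ^ 2 - 2 * G2 := by
    rw [hR1]
    calc
      ∑ i, ∑ j,
        ((∫ ω, ((U ω i - Us ω i) * (U ω i - Us ω i)) * ((V ω j - Vs ω j) * (V ω j - Vs ω j)) ∂μ)
          - ∫ ω, ((U ω i - Us ω i) * (U ω j - Us ω j)) * ((V ω i - Vs ω i) * (V ω j - Vs ω j)) ∂μ)
          = ∑ i, ∑ j,
            (2 * ((∫ ω, (U ω i * U ω i) * (V ω j * V ω j) ∂μ)
                - (∫ ω, (U ω i * U ω j) * (V ω i * V ω j) ∂μ))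
              + 2 * ((∫ ω, U ω i * U ω i ∂μ) * (∫ ω, V ω j * V ω j ∂μ))
              - 2 * ((∫ ω, U ω i * U ω j ∂μ) * (∫ ω, V ω i * V ω j ∂μ))
              + 4 * ((∫ ω, U ω i * V ω j ∂μ) * (∫ ω, U ω i * V ω j ∂μ))
              - 2 * ((∫ ω, U ω i * V ω i ∂μ) * (∫ ω, U ω j * V ω j ∂μ))
              - 2 * ((∫ ω, U ω i * V ω j ∂μ) * (∫ ω, U ω j * V ω i ∂μ))) := by
        refine Finset.sum_congr rfl fun i _ => Finset.sum_congr rfl fun j _ => ?_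
        rw [(quad i i j j).2, (quad i j i j).2]
        ring
      _ = 2 * QQ + 2 * 1 - 2 * (d:ℝ)⁻¹ + 4 * F2 - 2 * t ^ 2 - 2 * G2 := by
        rw [← hSA, ← hSB, ← hSc, hQQdef, hF2, hG2]
        simp only [Finset.sum_add_distrib, Finset.sum_sub_distrib, ← Finset.mul_sum]
      _ = 2 * QQ + 2 - 2 * (d:ℝ)⁻¹ + 4 * F2 - 2 * t ^ 2 - 2 * G2 := by ring
  -- positivity of QQ
  have hQQ0 : 0 ≤ QQ := by
    have hptQ : ∀ ω, ‖U ω‖ ^ 2 * ‖V ω‖ ^ 2 - ⟪U ω, V ω⟫ ^ 2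
        = ∑ i, ∑ j, ((U ω i * U ω i) * (V ω j * V ω j) - (U ω i * U ω j) * (V ω i * V ω j)) := by
      intro ω
      rw [norm_sq_eq, norm_sq_eq, inner_eq, pow_two, Finset.sum_mul_sum, Finset.sum_mul_sum,
        ← Finset.sum_sub_distrib]
      refine Finset.sum_congr rfl fun i _ => ?_
      rw [← Finset.sum_sub_distrib]
      exact Finset.sum_congr rfl fun j _ => by ring
    have hintQ : ∀ i j : Fin d, Integrable (fun ω =>
        (U ω i * U ω i) * (V ω j * V ω j) - (U ω i * U ω j) * (V ω i * V ω j)) μ :=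
      fun i j => (hIm i i j j).sub (hIm i j i j)
    have hQint : QQ = ∫ ω, (‖U ω‖ ^ 2 * ‖V ω‖ ^ 2 - ⟪U ω, V ω⟫ ^ 2) ∂μ := by
      rw [hQQdef, integral_congr_ae (ae_of_all _ hptQ),
        integral_finset_sum _ (fun i _ => integrable_finset_sum _ (fun j _ => hintQ i j))]
      refine Finset.sum_congr rfl fun i _ => ?_
      rw [integral_finset_sum _ (fun j _ => hintQ i j)]
      exact Finset.sum_congr rfl fun j _ => (integral_sub (hIm i i j j) (hIm i j i j)).symm
    rw [hQint]
    refine integral_nonneg fun ω => ?_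
    show (0:ℝ) ≤ ‖U ω‖ ^ 2 * ‖V ω‖ ^ 2 - ⟪U ω, V ω⟫ ^ 2
    have h := abs_real_inner_le_norm (U ω) (V ω)
    have h2 : ⟪U ω, V ω⟫ ^ 2 ≤ (‖U ω‖ * ‖V ω‖) ^ 2 := by
      rw [← sq_abs]
      exact pow_le_pow_left₀ (abs_nonneg _) h 2
    nlinarith [h2]
  -- G2 ≤ F2
  have hGF : G2 ≤ F2 := by
    have hswap : ∑ i, ∑ j, (∫ ω, U ω j * V ω i ∂μ) * (∫ ω, U ω j * V ω i ∂μ) = F2 := by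
      rw [hF2]; rw [Finset.sum_comm]
    have hle : G2 ≤ ∑ i, ∑ j, (((∫ ω, U ω i * V ω j ∂μ) * (∫ ω, U ω i * V ω j ∂μ)
        + (∫ ω, U ω j * V ω i ∂μ) * (∫ ω, U ω j * V ω i ∂μ)) / 2) := by
      rw [hG2]
      refine Finset.sum_le_sum fun i _ => Finset.sum_le_sum fun j _ => ?_
      nlinarith [sq_nonneg ((∫ ω, U ω i * V ω j ∂μ) - (∫ ω, U ω j * V ω i ∂μ))]
    calc G2 ≤ _ := hle
      _ = (F2 + ∑ i, ∑ j, (∫ ω, U ω j * V ω i ∂μ) * (∫ ω, U ω j * V ω i ∂μ)) / 2 := by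
        rw [hF2]
        simp only [← Finset.sum_add_distrib, ← Finset.sum_div]
      _ = (F2 + F2) / 2 := by rw [hswap]
      _ = F2 := by ring
  -- t² ≤ d * F2
  have hdiagF : ∑ i, (∫ ω, U ω i * V ω i ∂μ) ^ 2 ≤ F2 := by
    rw [hF2]
    refine Finset.sum_le_sum fun i _ => ?_
    rw [pow_two]
    exact Finset.single_le_sum (f := fun j => (∫ ω, U ω i * V ω j ∂μ) * (∫ ω, U ω i * V ω j ∂μ))
      (fun j _ => mul_self_nonneg _) (Finset.mem_univ i)
  have htF : t ^ 2 ≤ (d:ℝ) * F2 := by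
    have h1 : t ^ 2 ≤ (d:ℝ) * ∑ i, (∫ ω, U ω i * V ω i ∂μ) ^ 2 := by
      rw [htc]
      have := sq_sum_le_card_mul_sum_sq (s := (Finset.univ : Finset (Fin d)))
        (f := fun i => ∫ ω, U ω i * V ω i ∂μ)
      simpa using this
    calc t ^ 2 ≤ (d:ℝ) * ∑ i, (∫ ω, U ω i * V ω i ∂μ) ^ 2 := h1
      _ ≤ (d:ℝ) * F2 := by
        exact mul_le_mul_of_nonneg_left hdiagF (le_of_lt hdpos)
  -- t² ≤ 1
  have ht1 : t ^ 2 ≤ 1 := by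
    have habs : |t| ≤ 1 := by
      rw [hts]
      calc |∫ ω, ⟪U ω, V ω⟫ ∂μ| ≤ ∫ ω, |⟪U ω, V ω⟫| ∂μ := by
            simpa [Real.norm_eq_abs] using
              norm_integral_le_integral_norm (fun ω => ⟪U ω, V ω⟫) (μ := μ)
        _ ≤ ∫ ω, (‖U ω‖ ^ 2 + ‖V ω‖ ^ 2) / 2 ∂μ := by
            refine integral_mono hIinner.abs ((hU2.add hV2).div_const 2) fun ω => ?_
            have h := abs_real_inner_le_norm (U ω) (V ω)
            have : ‖U ω‖ * ‖V ω‖ ≤ (‖U ω‖ ^ 2 + ‖V ω‖ ^ 2) / 2 := by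
              nlinarith [sq_nonneg (‖U ω‖ - ‖V ω‖)]
            exact le_trans h this
        _ = 1 := by
            rw [integral_div, integral_add hU2 hV2, hUnorm, hVnorm]
            norm_num
    have := abs_le.mp habs
    nlinarith [this.1, this.2]
  -- conclusion
  rw [hL, hRfinal]
  have hk : (2:ℝ) ≤ (d:ℝ) := by exact_mod_cast hd
  have hk1 : (0:ℝ) < (d:ℝ) - 1 := by linarith
  rw [div_mul_eq_mul_div, le_div_iff₀ hk1]
  have hkk : (d:ℝ) * (d:ℝ)⁻¹ = 1 := mul_inv_cancel₀ hd0
  nlinarith [hQQ0, hGF, htF, ht1, hkk, hk,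
    mul_nonneg (by linarith : (0:ℝ) ≤ (d:ℝ)) hQQ0,
    mul_nonneg (by linarith : (0:ℝ) ≤ (d:ℝ)) (by linarith : (0:ℝ) ≤ F2 - G2),
    mul_nonneg (by linarith : (0:ℝ) ≤ (d:ℝ) - 1) (by nlinarith : (0:ℝ) ≤ 1 - t ^ 2)]
end

section
/- Let d ≥ 3, let u, u_*, v, v_* ∈ ℝ^d with u ≠ u_* and v ≠ v_*, set n_u := (u−u_*)/|u−u_*|, n_v := (v−v_*)/|v−v_*|, and let m_u, m_v, l be unit vectors such that (n_u, m_u, n_v, m_v, l) satisfies the frame hypothesis (n_u ⟂ m_u, n_v ⟂ m_v, l orthogonal to all four, n_u·n_v = m_u·m_v, n_u·m_v = −m_u·n_v). For (θ,φ) ∈ [0,π]×[0,π] define n'_u(θ,φ) := cosθ n_u + sinθ cosφ m_u + sinθ sinφ l, n'_v(θ,φ) analogously with (n_v,m_v,l), and the coupled post-collisional velocities u'(θ,φ) := (u+u_*)/2 + (|u−u_*|/2)n'_u(θ,φ), u'_*(θ,φ) := (u+u_*)/2 − (|u−u_*|/2)n'_u(θ,φ), and v'(θ,φ), v'_*(θ,φ)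 analogously. Let b be a (nonnegative) measure on [0,π] with λ := ∫_{[0,π]} sin²θ b(dθ) < ∞. Then the total expected coupling decrease equals the coupling creation functional: ∫_{[0,π]} ∫₀^π ( |u−v|² + |u_*−v_*|² − |u'(θ,φ)−v'(θ,φ)|² − |u'_*(θ,φ)−v'_*(θ,φ)|² ) · ( sin^{d−3}φ / ∫₀^π sin^{d−3}ψ dψ ) dφ b(dθ) = λ · (c_{d−1}/c_{d−3}) · ( |u−u_*||v−v_*| − (u−u_*)·(v−v_*) ). -/
open Real MeasureTheory
open scoped RealInnerProductSpace

/-- The `k`-th Wallis integral `c_k = ∫₀^{π/2} sin^k φ dφ`. -/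
noncomputable def wallis (k : ℕ) : ℝ := ∫ φ in (0 : ℝ)..(π / 2), sin φ ^ k

/-- Post-collisional direction of the spherical coupling, in the frame `(n, m, l)`,
with scattering angle `θ` and azimuthal angle `φ`. -/
noncomputable def postDir {d : ℕ} (n m l : EuclideanSpace ℝ (Fin d)) (θ φ : ℝ) :
    EuclideanSpace ℝ (Fin d) :=
  cos θ • n + (sin θ * cos φ) • m + (sin θ * sin φ) • l

/-- First post-collisional velocity of the two-body collision mapping. -/
noncomputable def postVel₁ {d : ℕ} (x xs dir : EuclideanSpace ℝ (Fin d)) :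
    EuclideanSpace ℝ (Fin d) :=
  (2 : ℝ)⁻¹ • (x + xs) + (‖x - xs‖ / 2) • dir

/-- Second post-collisional velocity of the two-body collision mapping. -/
noncomputable def postVel₂ {d : ℕ} (x xs dir : EuclideanSpace ℝ (Fin d)) :
    EuclideanSpace ℝ (Fin d) :=
  (2 : ℝ)⁻¹ • (x + xs) - (‖x - xs‖ / 2) • dir

lemma integral_sin_pow_pi' (k : ℕ) : ∫ x in (0:ℝ)..π, sin x ^ k = 2 * wallis k := by
  have hint : ∀ a b : ℝ, IntervalIntegrable (fun x => sin x ^ k) volume a b :=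
    fun a b => (continuous_sin.pow k).intervalIntegrable a b
  have h2 : ∫ x in (π/2 : ℝ)..π, sin x ^ k = wallis k := by
    have h := intervalIntegral.integral_comp_sub_left (fun x => sin x ^ k) π
      (a := π/2) (b := π)
    simp only [Real.sin_pi_sub, sub_self, sub_half] at h
    rw [h]; rfl
  rw [← intervalIntegral.integral_add_adjacent_intervals (hint 0 (π/2)) (hint (π/2) π), h2]
  unfold wallis; ring

lemma wallis_pos (k : ℕ) : 0 < wallis k := by
  have h1 := integral_sin_pow_pi' k
  have h := integral_sin_pow_pos (n := k)
  rw [h1] at h; linarith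

lemma inner_postDir_self {d : ℕ} (n m l : EuclideanSpace ℝ (Fin d))
    (hn : ⟪n,n⟫ = 1) (hm : ⟪m,m⟫ = 1) (hl : ⟪l,l⟫ = 1)
    (hnm : ⟪n,m⟫ = 0) (hnl : ⟪n,l⟫ = 0) (hml : ⟪m,l⟫ = 0) (θ φ : ℝ) :
    ⟪postDir n m l θ φ, postDir n m l θ φ⟫ = 1 := by
  have hmn : ⟪m,n⟫ = 0 := by rw [real_inner_comm]; exact hnm
  have hln : ⟪l,n⟫ = 0 := by rw [real_inner_comm]; exact hnl
  have hlm : ⟪l,m⟫ = 0 := by rw [real_inner_comm]; exact hml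
  simp only [postDir, inner_add_left, inner_add_right, real_inner_smul_left,
    real_inner_smul_right, hn, hm, hl, hnm, hnl, hml, hmn, hln, hlm]
  linear_combination sin_sq_add_cos_sq θ + sin θ ^ 2 * sin_sq_add_cos_sq φ

lemma inner_postDir {d : ℕ} (n m n' m' l : EuclideanSpace ℝ (Fin d))
    (hl : ⟪l,l⟫ = 1)
    (h1 : ⟪n,m'⟫ = -⟪m,n'⟫) (h2 : ⟪m,m'⟫ = ⟪n,n'⟫)
    (hnl : ⟪n,l⟫ = 0) (hml : ⟪m,l⟫ = 0) (hln : ⟪l,n'⟫ = 0) (hlm : ⟪l,m'⟫ = 0) (θ φ : ℝ) :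
    ⟪postDir n m l θ φ, postDir n' m' l θ φ⟫ =
      ⟪n,n'⟫ + sin θ ^ 2 * sin φ ^ 2 * (1 - ⟪n,n'⟫) := by
  simp only [postDir, inner_add_left, inner_add_right, real_inner_smul_left,
    real_inner_smul_right, hl, h1, h2, hnl, hml, hln, hlm]
  linear_combination ⟪n,n'⟫ * sin θ ^ 2 * sin_sq_add_cos_sq φ + ⟪n,n'⟫ * sin_sq_add_cos_sq θ

lemma coupling_norm_id {d : ℕ} (u us v vs D Ev : EuclideanSpace ℝ (Fin d))
    (hD : ⟪D,D⟫ = 1) (hE : ⟪Ev,Ev⟫ = 1) :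
    ‖u - v‖ ^ 2 + ‖us - vs‖ ^ 2 - ‖postVel₁ u us D - postVel₁ v vs Ev‖ ^ 2
      - ‖postVel₂ u us D - postVel₂ v vs Ev‖ ^ 2
      = ‖u - us‖ * ‖v - vs‖ * ⟪D,Ev⟫ - ⟪u - us, v - vs⟫ := by
  set x : EuclideanSpace ℝ (Fin d) := (2:ℝ)⁻¹ • (u + us) - (2:ℝ)⁻¹ • (v + vs) with hx
  set w : EuclideanSpace ℝ (Fin d) := (2:ℝ)⁻¹ • (u - us) - (2:ℝ)⁻¹ • (v - vs) with hwdef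
  set y : EuclideanSpace ℝ (Fin d) := (‖u - us‖ / 2) • D - (‖v - vs‖ / 2) • Ev with hy
  have e1 : u - v = x + w := by rw [hx, hwdef]; module
  have e2 : us - vs = x - w := by rw [hx, hwdef]; module
  have e3 : postVel₁ u us D - postVel₁ v vs Ev = x + y := by
    simp only [postVel₁, hx, hy]; module
  have e4 : postVel₂ u us D - postVel₂ v vs Ev = x - y := by
    simp only [postVel₂, hx, hy]; module
  have hw : ‖w‖ ^ 2 = (‖u - us‖ ^ 2 + ‖v - vs‖ ^ 2 - 2 * ⟪u - us, v - vs⟫) / 4 := by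
    have hw2 : w = (2:ℝ)⁻¹ • ((u - us) - (v - vs)) := by rw [hwdef]; module
    rw [hw2, norm_smul, mul_pow, norm_sub_sq_real]
    simp only [Real.norm_eq_abs]
    rw [abs_of_nonneg (by norm_num : ((2:ℝ)⁻¹) ≥ 0)]
    ring
  have hDn : ‖D‖ ^ 2 = 1 := by rw [← real_inner_self_eq_norm_sq]; exact hD
  have hEn : ‖Ev‖ ^ 2 = 1 := by rw [← real_inner_self_eq_norm_sq]; exact hE
  have hyn : ‖y‖ ^ 2 = (‖u - us‖ ^ 2 + ‖v - vs‖ ^ 2 - 2 * ‖u - us‖ * ‖v - vs‖ * ⟪D,Ev⟫) / 4 := by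
    rw [hy, norm_sub_sq_real, norm_smul, norm_smul, real_inner_smul_left, real_inner_smul_right,
      mul_pow, mul_pow, hDn, hEn]
    simp only [Real.norm_eq_abs]
    rw [abs_of_nonneg (by positivity : (0:ℝ) ≤ ‖u - us‖ / 2),
      abs_of_nonneg (by positivity : (0:ℝ) ≤ ‖v - vs‖ / 2)]
    ring
  rw [e1, e2, e3, e4, norm_add_sq_real x w, norm_sub_sq_real x w, norm_add_sq_real x y,
    norm_sub_sq_real x y, hw, hyn]
  ring

/-- The total expected coupling decrease of a spherically coupled
Maxwell collision, integrated over the azimuthal density `sin^{d−3}φ` on `[0,π]` and over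
the angular collision kernel `b`, equals the coupling creation functional
`λ (c_{d−1}/c_{d−3}) (|u−u_*||v−v_*| − (u−u_*)·(v−v_*))` with `λ = ∫ sin²θ b(dθ)`. -/
theorem stmt13 {d : ℕ} (hd : 3 ≤ d)
    (u us v vs : EuclideanSpace ℝ (Fin d)) (hu : u ≠ us) (hv : v ≠ vs)
    (mu mv l : EuclideanSpace ℝ (Fin d))
    (hmu : ‖mu‖ = 1) (hmv : ‖mv‖ = 1) (hl : ‖l‖ = 1)
    (hnumu : ⟪‖u - us‖⁻¹ • (u - us), mu⟫ = 0) (hnvmv : ⟪‖v - vs‖⁻¹ • (v - vs), mv⟫ = 0)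
    (hlnu : ⟪l, ‖u - us‖⁻¹ • (u - us)⟫ = 0) (hlmu : ⟪l, mu⟫ = 0)
    (hlnv : ⟪l, ‖v - vs‖⁻¹ • (v - vs)⟫ = 0) (hlmv : ⟪l, mv⟫ = 0)
    (hframe1 : ⟪‖u - us‖⁻¹ • (u - us), ‖v - vs‖⁻¹ • (v - vs)⟫ = ⟪mu, mv⟫)
    (hframe2 : ⟪‖u - us‖⁻¹ • (u - us), mv⟫ = -⟪mu, ‖v - vs‖⁻¹ • (v - vs)⟫)
    (b : Measure ℝ) (hbsupp : b (Set.Icc (0 : ℝ) π)ᶜ = 0)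
    (hlam : Integrable (fun θ => sin θ ^ 2) b) :
    ∫ θ, (∫ φ in (0 : ℝ)..π,
        (‖u - v‖ ^ 2 + ‖us - vs‖ ^ 2
          - ‖postVel₁ u us (postDir (‖u - us‖⁻¹ • (u - us)) mu l θ φ) -
              postVel₁ v vs (postDir (‖v - vs‖⁻¹ • (v - vs)) mv l θ φ)‖ ^ 2
          - ‖postVel₂ u us (postDir (‖u - us‖⁻¹ • (u - us)) mu l θ φ) -
              postVel₂ v vs (postDir (‖v - vs‖⁻¹ • (v - vs)) mv l θ φ)‖ ^ 2) *
          (sin φ ^ (d - 3) / ∫ ψ in (0 : ℝ)..π, sin ψ ^ (d - 3))) ∂b =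
      (∫ θ, sin θ ^ 2 ∂b) * (wallis (d - 1) / wallis (d - 3)) *
        (‖u - us‖ * ‖v - vs‖ - ⟪u - us, v - vs⟫) := by
  have ha : ‖u - us‖ ≠ 0 := norm_ne_zero_iff.mpr (sub_ne_zero.mpr hu)
  have hb : ‖v - vs‖ ≠ 0 := norm_ne_zero_iff.mpr (sub_ne_zero.mpr hv)
  set nu : EuclideanSpace ℝ (Fin d) := ‖u - us‖⁻¹ • (u - us) with hnu
  set nv : EuclideanSpace ℝ (Fin d) := ‖v - vs‖⁻¹ • (v - vs) with hnv
  have hll : ⟪l,l⟫ = 1 := by rw [real_inner_self_eq_norm_sq, hl]; norm_num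
  have hmumu : ⟪mu,mu⟫ = 1 := by rw [real_inner_self_eq_norm_sq, hmu]; norm_num
  have hmvmv : ⟪mv,mv⟫ = 1 := by rw [real_inner_self_eq_norm_sq, hmv]; norm_num
  have hnunu : ⟪nu,nu⟫ = 1 := by
    rw [hnu, real_inner_smul_left, real_inner_smul_right, real_inner_self_eq_norm_sq]
    field_simp
  have hnvnv : ⟪nv,nv⟫ = 1 := by
    rw [hnv, real_inner_smul_left, real_inner_smul_right, real_inner_self_eq_norm_sq]
    field_simp
  have hnul : ⟪nu,l⟫ = 0 := by rw [real_inner_comm]; exact hlnu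
  have hnvl : ⟪nv,l⟫ = 0 := by rw [real_inner_comm]; exact hlnv
  have hmul : ⟪mu,l⟫ = 0 := by rw [real_inner_comm]; exact hlmu
  have hmvl : ⟪mv,l⟫ = 0 := by rw [real_inner_comm]; exact hlmv
  have hX : ‖u - us‖ * ‖v - vs‖ * ⟪nu,nv⟫ = ⟪u - us, v - vs⟫ := by
    rw [hnu, hnv, real_inner_smul_left, real_inner_smul_right]
    field_simp
  have hDunit : ∀ θ φ : ℝ, ⟪postDir nu mu l θ φ, postDir nu mu l θ φ⟫ = 1 :=
    fun θ φ => inner_postDir_self nu mu l hnunu hmumu hll hnumu hnul hmul θ φ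
  have hEunit : ∀ θ φ : ℝ, ⟪postDir nv mv l θ φ, postDir nv mv l θ φ⟫ = 1 :=
    fun θ φ => inner_postDir_self nv mv l hnvnv hmvmv hll hnvmv hnvl hmvl θ φ
  have key : ∀ θ φ : ℝ,
      (‖u - v‖ ^ 2 + ‖us - vs‖ ^ 2
          - ‖postVel₁ u us (postDir nu mu l θ φ) - postVel₁ v vs (postDir nv mv l θ φ)‖ ^ 2
          - ‖postVel₂ u us (postDir nu mu l θ φ) - postVel₂ v vs (postDir nv mv l θ φ)‖ ^ 2)
        = sin θ ^ 2 * sin φ ^ 2 * (‖u - us‖ * ‖v - vs‖ - ⟪u - us, v - vs⟫) := by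
    intro θ φ
    rw [coupling_norm_id u us v vs _ _ (hDunit θ φ) (hEunit θ φ),
      inner_postDir nu mu nv mv l hll hframe2 hframe1.symm hnul hmul hlnv hlmv θ φ]
    linear_combination (1 - sin θ ^ 2 * sin φ ^ 2) * hX
  have I3 : ∫ ψ in (0:ℝ)..π, sin ψ ^ (d-3) = 2 * wallis (d-3) := integral_sin_pow_pi' _
  have hw3 : wallis (d-3) ≠ 0 := (wallis_pos _).ne'
  have inner_eq : ∀ θ : ℝ,
      (∫ φ in (0 : ℝ)..π,
        (‖u - v‖ ^ 2 + ‖us - vs‖ ^ 2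
          - ‖postVel₁ u us (postDir nu mu l θ φ) - postVel₁ v vs (postDir nv mv l θ φ)‖ ^ 2
          - ‖postVel₂ u us (postDir nu mu l θ φ) - postVel₂ v vs (postDir nv mv l θ φ)‖ ^ 2) *
          (sin φ ^ (d - 3) / ∫ ψ in (0 : ℝ)..π, sin ψ ^ (d - 3)))
      = sin θ ^ 2 * ((wallis (d-1) / wallis (d-3)) *
          (‖u - us‖ * ‖v - vs‖ - ⟪u - us, v - vs⟫)) := by
    intro θ
    have hpt : ∀ φ : ℝ,
        (‖u - v‖ ^ 2 + ‖us - vs‖ ^ 2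
          - ‖postVel₁ u us (postDir nu mu l θ φ) - postVel₁ v vs (postDir nv mv l θ φ)‖ ^ 2
          - ‖postVel₂ u us (postDir nu mu l θ φ) - postVel₂ v vs (postDir nv mv l θ φ)‖ ^ 2) *
          (sin φ ^ (d - 3) / ∫ ψ in (0 : ℝ)..π, sin ψ ^ (d - 3))
        = (sin θ ^ 2 * (‖u - us‖ * ‖v - vs‖ - ⟪u - us, v - vs⟫) / (2 * wallis (d-3))) *
            sin φ ^ (d - 1) := by
      intro φ
      rw [key θ φ, I3, show sin φ ^ (d-1) = sin φ ^ 2 * sin φ ^ (d-3) by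
        rw [← pow_add]; congr 1; omega]
      ring
    rw [intervalIntegral.integral_congr (fun φ _ => hpt φ),
      intervalIntegral.integral_const_mul, integral_sin_pow_pi']
    field_simp
  rw [show (fun θ => ∫ φ in (0 : ℝ)..π,
        (‖u - v‖ ^ 2 + ‖us - vs‖ ^ 2
          - ‖postVel₁ u us (postDir nu mu l θ φ) - postVel₁ v vs (postDir nv mv l θ φ)‖ ^ 2
          - ‖postVel₂ u us (postDir nu mu l θ φ) - postVel₂ v vs (postDir nv mv l θ φ)‖ ^ 2) *
          (sin φ ^ (d - 3) / ∫ ψ in (0 : ℝ)..π, sin ψ ^ (d - 3)))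
      = fun θ => sin θ ^ 2 * ((wallis (d-1) / wallis (d-3)) *
          (‖u - us‖ * ‖v - vs‖ - ⟪u - us, v - vs⟫)) from funext inner_eq,
    integral_mul_const]
  ring
end
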